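/- For every N ≥ 1 and every integer m with 0 ≤ m ≤ N, it holds that P[∑_{k=0}^{N−1} φ_k = m] ≤ (N choose m)·(1 − p)^{N−m}. -/

import Mathlib

open MeasureTheory

theorem aux_zero {Ω : Type*} {F : MeasurableSpace Ω} (P : Measure Ω) [IsProbabilityMeasure P]
    (H : ℕ → MeasurableSpace Ω) (hHle : ∀ k, H k ≤ F) (hHmono : Monotone H)
    (p : ℝ) (hp0 : 0 ≤ p) (hp1 : p ≤ 1)
    (φ : ℕ → Ω → ℝ) (hφ01 : ∀ k ω, φ k ω = 0 ∨ φ k ω = 1)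
    (hadapted : ∀ k, Measurable[H k] (φ k))
    (hcond : ∀ k : ℕ,
      (fun _ => p) ≤ᵐ[P]
        MeasureTheory.condExp (Nat.casesOn k (⊥ : MeasurableSpace Ω) H) P (φ k)) :
    ∀ n : ℕ, ∀ B : Finset ℕ, B ⊆ Finset.range n →
      P {ω | ∀ k ∈ B, φ k ω = 0} ≤ ENNReal.ofReal ((1 - p) ^ B.card) := by
  have h1p : (0:ℝ) ≤ 1 - p := by linarith
  intro n
  induction n with
  | zero =>
    intro B hB
    have hBe : B = ∅ := Finset.subset_empty.mp (by simpa using hB)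
    subst hBe
    simp only [Finset.notMem_empty, false_implies, implies_true, Set.setOf_true,
      Finset.card_empty, pow_zero]
    simp [ENNReal.ofReal_one]
  | succ n ih =>
    intro B hB
    by_cases hn : n ∈ B
    · set B' := B.erase n with hB'def
      have hB' : B' ⊆ Finset.range n := by
        intro k hk
        have hk1 := Finset.mem_erase.mp hk
        have := Finset.mem_range.mp (hB hk1.2)
        exact Finset.mem_range.mpr (by omega)
      set G : MeasurableSpace Ω := Nat.casesOn n (⊥ : MeasurableSpace Ω) H with hGdef
      have hGle : G ≤ F := by
        cases n with
        | zero => exact bot_le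
        | succ j => exact hHle j
      set S := {ω | ∀ k ∈ B', φ k ω = 0} with hSdef
      letI _instF : MeasurableSpace Ω := F
      have hSmeasG : MeasurableSet[G] S := by
        have hSeq : S = ⋂ k ∈ (B' : Set ℕ), φ k ⁻¹' {0} := by
          ext ω; simp [hSdef]
        rw [hSeq]
        refine MeasurableSet.biInter (Set.to_countable _) (fun k hk => ?_)
        have hk' : k < n := Finset.mem_range.mp (hB' hk)
        have hle : H k ≤ G := by
          cases n with
          | zero => omega
          | succ j => exact hHmono (by omega)
        exact hle _ ((hadapted k) (measurableSet_singleton 0))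
      have hSmeas : MeasurableSet[F] S := hGle _ hSmeasG
      have hφmeas : Measurable[F] (φ n) := (hadapted n).mono (hHle n) le_rfl
      have hInt : Integrable (φ n) P := by
        refine (integrable_const (1:ℝ)).mono' hφmeas.aestronglyMeasurable ?_
        filter_upwards with ω
        rcases hφ01 n ω with h | h <;> simp [h]
      have hT : MeasurableSet[F] {ω | φ n ω = 0} := hφmeas (measurableSet_singleton 0)
      have hset : {ω | ∀ k ∈ B, φ k ω = 0} = S ∩ {ω | φ n ω = 0} := by
        ext ω
        simp only [Set.mem_inter_iff, Set.mem_setOf_eq, hSdef]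
        constructor
        · intro h; exact ⟨fun k hk => h k (Finset.erase_subset _ _ hk), h n hn⟩
        · rintro ⟨h1, h2⟩ k hk
          by_cases hkn : k = n
          · subst hkn; exact h2
          · exact h1 k (Finset.mem_erase.mpr ⟨hkn, hk⟩)
      -- integral computations
      have hI1 : ∫ ω in S, (1 - φ n ω) ∂P = (P (S ∩ {ω | φ n ω = 0})).toReal := by
        have heq : ∀ ω, 1 - φ n ω = Set.indicator {ω | φ n ω = 0} (fun _ => (1:ℝ)) ω := by
          intro ω
          rcases hφ01 n ω with h | h
          · rw [Set.indicator_of_mem (by simpa using h)]; simp [h]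
          · rw [Set.indicator_of_notMem (by simp [h])]; simp [h]
        calc ∫ ω in S, (1 - φ n ω) ∂P
            = ∫ ω in S, Set.indicator {ω | φ n ω = 0} (fun _ => (1:ℝ)) ω ∂P := by
              simp_rw [heq]
          _ = ∫ ω in S ∩ {ω | φ n ω = 0}, (1:ℝ) ∂P := setIntegral_indicator hT
          _ = (P (S ∩ {ω | φ n ω = 0})).toReal := by
              rw [setIntegral_const]; simp; rfl
      have hI2 : ∫ ω in S, (1 - φ n ω) ∂P = (P S).toReal - ∫ ω in S, φ n ω ∂P := by
        rw [integral_sub (integrableOn_const (C := (1:ℝ)) (measure_lt_top P S).ne)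
          hInt.integrableOn]
        simp [setIntegral_const]; rfl
      have hI3 : p * (P S).toReal ≤ ∫ ω in S, φ n ω ∂P := by
        have hce := setIntegral_condExp hGle hInt hSmeasG
        have hmono : ∫ ω in S, (fun _ => p) ω ∂P ≤ ∫ ω in S, (P[φ n|G]) ω ∂P := by
          refine setIntegral_mono_ae_restrict
            (integrableOn_const (measure_lt_top P S).ne)
            integrable_condExp.integrableOn (ae_restrict_of_ae ?_)
          exact hcond n
        rw [hce] at hmono
        calc p * (P S).toReal = ∫ ω in S, (fun _ => p) ω ∂P := by
              rw [setIntegral_const]; ring_nf; rfl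
          _ ≤ _ := hmono
      have hIHS : (P S).toReal ≤ (1 - p) ^ B'.card := by
        have := ih B' hB'
        exact ENNReal.toReal_le_of_le_ofReal (pow_nonneg h1p _) this
      have hfin : (P (S ∩ {ω | φ n ω = 0})).toReal ≤ (1 - p) ^ B.card := by
        have hcard : B.card = B'.card + 1 := by
          rw [hB'def, Finset.card_erase_of_mem hn]
          have : 1 ≤ B.card := Finset.card_pos.mpr ⟨n, hn⟩
          omega
        rw [← hI1, hI2, hcard, pow_succ]
        have h1 : (P S).toReal - ∫ ω in S, φ n ω ∂P ≤ (1 - p) * (P S).toReal := by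
          nlinarith [hI3]
        calc (P S).toReal - ∫ ω in S, φ n ω ∂P ≤ (1 - p) * (P S).toReal := h1
          _ ≤ (1 - p) * (1 - p) ^ B'.card := by
              exact mul_le_mul_of_nonneg_left hIHS h1p
          _ = (1 - p) ^ B'.card * (1 - p) := by ring
      rw [hset, ENNReal.le_ofReal_iff_toReal_le (measure_ne_top P _) (pow_nonneg h1p _)]
      exact hfin
    · have hBsub : B ⊆ Finset.range n := by
        intro k hk
        have := Finset.mem_range.mp (hB hk)
        refine Finset.mem_range.mpr ?_
        rcases Nat.lt_succ_iff_lt_or_eq.mp this with h | h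
        · exact h
        · exact absurd (h ▸ hk) hn
      exact ih B hBsub

/-- If the `{0,1}`-valued variables `φ k` are adapted to the filtration `H` and satisfy
`E[φ k | H (k−1)] ≥ p` a.s. (with `H (−1)` the trivial σ-algebra), then
`P[∑_{k<N} φ k = m] ≤ (N choose m) (1 − p)^{N−m}`. -/
theorem stmt5 {Ω : Type*} {F : MeasurableSpace Ω} (P : Measure Ω) [IsProbabilityMeasure P]
    (H : ℕ → MeasurableSpace Ω) (hHle : ∀ k, H k ≤ F) (hHmono : Monotone H)
    (p : ℝ) (hp0 : 0 ≤ p) (hp1 : p ≤ 1)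
    (φ : ℕ → Ω → ℝ) (hφ01 : ∀ k ω, φ k ω = 0 ∨ φ k ω = 1)
    (hadapted : ∀ k, Measurable[H k] (φ k))
    (hcond : ∀ k : ℕ,
      (fun _ => p) ≤ᵐ[P]
        MeasureTheory.condExp (Nat.casesOn k (⊥ : MeasurableSpace Ω) H) P (φ k)) :
    ∀ N : ℕ, 1 ≤ N → ∀ m : ℕ, m ≤ N →
      P {ω | ∑ k ∈ Finset.range N, φ k ω = (m : ℝ)}
        ≤ ENNReal.ofReal ((N.choose m : ℝ) * (1 - p) ^ (N - m)) := by
  intro N hN m hm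
  have h1p : (0:ℝ) ≤ 1 - p := by linarith
  classical
  have hsub : {ω | ∑ k ∈ Finset.range N, φ k ω = (m : ℝ)} ⊆
      ⋃ A ∈ (Finset.range N).powersetCard m, {ω | ∀ k ∈ Finset.range N \ A, φ k ω = 0} := by
    intro ω hω
    simp only [Set.mem_setOf_eq] at hω
    set A := (Finset.range N).filter (fun k => φ k ω = 1) with hAdef
    have hsum : ∑ k ∈ Finset.range N, φ k ω = (A.card : ℝ) := by
      rw [hAdef, ← Finset.sum_boole]
      refine Finset.sum_congr rfl (fun k _ => ?_)
      rcases hφ01 k ω with h | h <;> simp [h]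
    have hAcard : A.card = m := by
      have : (A.card : ℝ) = (m : ℝ) := by rw [← hsum, hω]
      exact_mod_cast this
    simp only [Set.mem_iUnion, exists_prop]
    refine ⟨A, Finset.mem_powersetCard.mpr ⟨Finset.filter_subset _ _, hAcard⟩, ?_⟩
    intro k hk
    have hk1 := Finset.mem_sdiff.mp hk
    rcases hφ01 k ω with h | h
    · exact h
    · exact absurd (Finset.mem_filter.mpr ⟨hk1.1, h⟩) hk1.2
  calc P {ω | ∑ k ∈ Finset.range N, φ k ω = (m : ℝ)}
      ≤ P (⋃ A ∈ (Finset.range N).powersetCard m,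
          {ω | ∀ k ∈ Finset.range N \ A, φ k ω = 0}) := measure_mono hsub
    _ ≤ ∑ A ∈ (Finset.range N).powersetCard m,
          P {ω | ∀ k ∈ Finset.range N \ A, φ k ω = 0} := measure_biUnion_finset_le _ _
    _ ≤ ∑ A ∈ (Finset.range N).powersetCard m,
          ENNReal.ofReal ((1 - p) ^ (N - m)) := by
        refine Finset.sum_le_sum (fun A hA => ?_)
        have hA' := Finset.mem_powersetCard.mp hA
        have hcard : (Finset.range N \ A).card = N - m := by
          rw [Finset.card_sdiff_of_subset hA'.1, Finset.card_range, hA'.2]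
        have := aux_zero P H hHle hHmono p hp0 hp1 φ hφ01 hadapted hcond N
          (Finset.range N \ A) (Finset.sdiff_subset)
        rwa [hcard] at this
    _ = ((Finset.range N).powersetCard m).card • ENNReal.ofReal ((1 - p) ^ (N - m)) := by
        rw [Finset.sum_const]
    _ = ENNReal.ofReal ((N.choose m : ℝ) * (1 - p) ^ (N - m)) := by
        rw [Finset.card_powersetCard, Finset.card_range, nsmul_eq_mul,
          ENNReal.ofReal_mul (by positivity), ENNReal.ofReal_natCast]
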